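/- arXiv:2112.14087 — 3 statements merged into one kernel-verified Lean document; each statement's English description precedes it below -/
import Mathlib

section
/- (Theorem 1, explicit attention form.) Define the self-attention output Attn(q,k,v) = v · σ((qᵀk)/√d) ∈ ℝ^{d×p}, where σ is the column-wise softmax on ℝ^{p×p}, i.e., σ(S)_{ij} = exp(S_{ij}) / Σ_{m} exp(S_{mj}). For any projection matrix W ∈ ℝ^{d₀×d} and any Fréchet differentiable f : ℝ^{d₀×p} → ℝ, set L(Q,K,V,z) = f(W · Attn(Qz, Kz, Vz)). Then L is differentiable in (Q,K,V,z) and its gradient matrices satisfy (∇_z L) zᵀ = Qᵀ(∇_Q L) + Kᵀ(∇_K L) + Vᵀ(∇_V L). -/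
set_option maxHeartbeats 1000000

/-!
STATEMENT 3 (Theorem 1, explicit attention form).
`Attn q k v = v * σ((qᵀ k)/√d)` with column-wise softmax `σ`; for a projection
`W` and differentiable `f`, `L(Q,K,V,z) = f (W * Attn (Qz) (Kz) (Vz))` is
differentiable in `(Q,K,V,z)` and its gradient matrices satisfy
`(∇_z L) zᵀ = Qᵀ (∇_Q L) + Kᵀ (∇_K L) + Vᵀ (∇_V L)`.
-/

open Matrix

attribute [local instance] Matrix.normedAddCommGroup Matrix.normedSpace

noncomputable section

/-- `G` is the gradient matrix of the scalar function `F` at `X`: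
it represents the Fréchet derivative of `F` at `X` via the Frobenius
inner product, `(dF)(H) = trace (Gᵀ * H)`. -/
def HasGradientMatrixAt {α β : Type*} [Fintype α] [Fintype β]
    (F : Matrix α β ℝ → ℝ) (G : Matrix α β ℝ) (X : Matrix α β ℝ) : Prop :=
  ∃ D : Matrix α β ℝ →L[ℝ] ℝ, HasFDerivAt F D X ∧ ∀ H, D H = Matrix.trace (Gᵀ * H)

/-- Column-wise softmax on `p × p` matrices:
`σ(S)_{ij} = exp S_{ij} / ∑_m exp S_{mj}`. -/
def softmaxCols {p : ℕ} (S : Matrix (Fin p) (Fin p) ℝ) : Matrix (Fin p) (Fin p) ℝ :=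
  Matrix.of fun i j => Real.exp (S i j) / ∑ m, Real.exp (S m j)

/-- Self-attention output `Attn(q,k,v) = v * σ((qᵀ k)/√d)`. -/
def Attn {d p : ℕ} (q k v : Matrix (Fin d) (Fin p) ℝ) : Matrix (Fin d) (Fin p) ℝ :=
  v * softmaxCols ((Real.sqrt d)⁻¹ • (qᵀ * k))

section Aux
set_option linter.unusedSectionVars false

variable {m n k : Type*} [Fintype m] [Fintype n] [Fintype k]

lemma differentiable_entry (i : m) (j : n) :
    Differentiable ℝ (fun M : Matrix m n ℝ => M i j) :=
  (differentiable_pi.mp ((differentiable_pi.mp differentiable_id) i)) j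

lemma differentiable_matrix_of {E : Type*} [NormedAddCommGroup E] [NormedSpace ℝ E]
    {F : E → Matrix m n ℝ} (h : ∀ i j, Differentiable ℝ fun x => F x i j) :
    Differentiable ℝ F :=
  differentiable_pi.mpr fun i => differentiable_pi.mpr fun j => h i j

lemma Differentiable.matMul {E : Type*} [NormedAddCommGroup E] [NormedSpace ℝ E]
    {A : E → Matrix m n ℝ} {B : E → Matrix n k ℝ}
    (hA : Differentiable ℝ A) (hB : Differentiable ℝ B) :
    Differentiable ℝ (fun x => A x * B x) := by
  apply differentiable_matrix_of
  intro i j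
  simp only [Matrix.mul_apply]
  exact Differentiable.fun_sum fun t _ =>
    (((differentiable_entry i t).comp hA).mul ((differentiable_entry t j).comp hB))

lemma differentiable_softmaxCols {p : ℕ} :
    Differentiable ℝ (fun S : Matrix (Fin p) (Fin p) ℝ => softmaxCols S) := by
  apply differentiable_matrix_of
  intro i j
  have hpos : ∀ S : Matrix (Fin p) (Fin p) ℝ, (0:ℝ) < ∑ m, Real.exp (S m j) :=
    fun S => Finset.sum_pos (fun t _ => Real.exp_pos _) ⟨i, Finset.mem_univ i⟩
  simp only [softmaxCols, Matrix.of_apply]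
  have h1 : Differentiable ℝ (fun S : Matrix (Fin p) (Fin p) ℝ => Real.exp (S i j)) :=
    (differentiable_entry i j).exp
  have h2 : Differentiable ℝ (fun S : Matrix (Fin p) (Fin p) ℝ => ∑ t, Real.exp (S t j)) :=
    Differentiable.fun_sum fun t _ => (differentiable_entry t j).exp
  simp only [div_eq_mul_inv]
  exact h1.mul (h2.inv fun S => ne_of_gt (hpos S))

/-- right multiplication by a fixed matrix, as a continuous linear map -/
def mulRightCLM (z : Matrix n k ℝ) : Matrix m n ℝ →L[ℝ] Matrix m k ℝ :=
  LinearMap.toContinuousLinearMap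
    { toFun := fun H => H * z
      map_add' := fun a b => Matrix.add_mul a b z
      map_smul' := fun r a => Matrix.smul_mul r a z }

/-- left multiplication by a fixed matrix, as a continuous linear map -/
def mulLeftCLM (Q : Matrix m n ℝ) : Matrix n k ℝ →L[ℝ] Matrix m k ℝ :=
  LinearMap.toContinuousLinearMap
    { toFun := fun H => Q * H
      map_add' := fun a b => Matrix.mul_add Q a b
      map_smul' := fun r a => Matrix.mul_smul Q r a }

@[simp] lemma mulRightCLM_apply (z : Matrix n k ℝ) (H : Matrix m n ℝ) :
    mulRightCLM z H = H * z := rfl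
@[simp] lemma mulLeftCLM_apply (Q : Matrix m n ℝ) (H : Matrix n k ℝ) :
    mulLeftCLM Q H = Q * H := rfl

variable [DecidableEq m] [DecidableEq n]

lemma clm_expand {F : Type*} [NormedAddCommGroup F] [NormedSpace ℝ F]
    (D : Matrix m n ℝ →L[ℝ] F) (H : Matrix m n ℝ) :
    D H = ∑ i, ∑ j, H i j • D (Matrix.single i j (1:ℝ)) := by
  conv_lhs => rw [matrix_eq_sum_single H]
  rw [map_sum]
  refine Finset.sum_congr rfl fun i _ => ?_
  rw [map_sum]
  refine Finset.sum_congr rfl fun j _ => ?_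
  rw [show Matrix.single i j (H i j) = H i j • Matrix.single i j (1:ℝ) by
    simp [Matrix.smul_single], _root_.map_smul]

lemma traceT_mul (G H : Matrix m n ℝ) :
    Matrix.trace (Gᵀ * H) = ∑ i, ∑ j, G i j * H i j := by
  simp [Matrix.trace, Matrix.diag, Matrix.mul_apply]
  rw [Finset.sum_comm]

end Aux

/-- the attention loss as a function of the (q,k,v) triple -/
def attnLoss {d p d₀ : ℕ} (W : Matrix (Fin d₀) (Fin d) ℝ)
    (f : Matrix (Fin d₀) (Fin p) ℝ → ℝ) :
    Matrix (Fin d) (Fin p) ℝ × Matrix (Fin d) (Fin p) ℝ × Matrix (Fin d) (Fin p) ℝ → ℝ :=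
  fun x => f (W * Attn x.1 x.2.1 x.2.2)

lemma differentiable_attnLoss {d p d₀ : ℕ} (W : Matrix (Fin d₀) (Fin d) ℝ)
    {f : Matrix (Fin d₀) (Fin p) ℝ → ℝ} (hf : Differentiable ℝ f) :
    Differentiable ℝ (attnLoss W f) := by
  have h1 : Differentiable ℝ (fun x : Matrix (Fin d) (Fin p) ℝ × Matrix (Fin d) (Fin p) ℝ ×
      Matrix (Fin d) (Fin p) ℝ => x.1) := differentiable_fst
  have h2 : Differentiable ℝ (fun x : Matrix (Fin d) (Fin p) ℝ × Matrix (Fin d) (Fin p) ℝ ×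
      Matrix (Fin d) (Fin p) ℝ => x.2.1) := differentiable_fst.comp differentiable_snd
  have h3 : Differentiable ℝ (fun x : Matrix (Fin d) (Fin p) ℝ × Matrix (Fin d) (Fin p) ℝ ×
      Matrix (Fin d) (Fin p) ℝ => x.2.2) := differentiable_snd.comp differentiable_snd
  have hT : Differentiable ℝ (fun x : Matrix (Fin d) (Fin p) ℝ × Matrix (Fin d) (Fin p) ℝ ×
      Matrix (Fin d) (Fin p) ℝ => (x.1)ᵀ) :=
    differentiable_matrix_of fun i j => (differentiable_entry j i).comp h1
  have hS : Differentiable ℝ (fun x : Matrix (Fin d) (Fin p) ℝ × Matrix (Fin d) (Fin p) ℝ ×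
      Matrix (Fin d) (Fin p) ℝ => (Real.sqrt d)⁻¹ • ((x.1)ᵀ * x.2.1)) :=
    (hT.matMul h2).fun_const_smul _
  have hσ := differentiable_softmaxCols.comp hS
  have hA : Differentiable ℝ (fun x : Matrix (Fin d) (Fin p) ℝ × Matrix (Fin d) (Fin p) ℝ ×
      Matrix (Fin d) (Fin p) ℝ => Attn x.1 x.2.1 x.2.2) := h3.matMul hσ
  exact hf.comp ((differentiable_const W).matMul hA)

theorem april_identity_attention {p c d d₀ : ℕ}
    (hp : 0 < p) (hc : 0 < c) (hd : 0 < d) (hd₀ : 0 < d₀)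
    (W : Matrix (Fin d₀) (Fin d) ℝ)
    (f : Matrix (Fin d₀) (Fin p) ℝ → ℝ) (hf : Differentiable ℝ f) :
    Differentiable ℝ
      (fun x : Matrix (Fin d) (Fin c) ℝ × Matrix (Fin d) (Fin c) ℝ ×
               Matrix (Fin d) (Fin c) ℝ × Matrix (Fin c) (Fin p) ℝ =>
        f (W * Attn (x.1 * x.2.2.2) (x.2.1 * x.2.2.2) (x.2.2.1 * x.2.2.2))) ∧
    ∀ (Q K V : Matrix (Fin d) (Fin c) ℝ) (z : Matrix (Fin c) (Fin p) ℝ),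
      ∃ (GQ GK GV : Matrix (Fin d) (Fin c) ℝ) (Gz : Matrix (Fin c) (Fin p) ℝ),
        HasGradientMatrixAt (fun Q' => f (W * Attn (Q' * z) (K * z) (V * z))) GQ Q ∧
        HasGradientMatrixAt (fun K' => f (W * Attn (Q * z) (K' * z) (V * z))) GK K ∧
        HasGradientMatrixAt (fun V' => f (W * Attn (Q * z) (K * z) (V' * z))) GV V ∧
        HasGradientMatrixAt (fun z' => f (W * Attn (Q * z') (K * z') (V * z'))) Gz z ∧
        Gz * zᵀ = Qᵀ * GQ + Kᵀ * GK + Vᵀ * GV := by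
  constructor
  · -- joint differentiability
    have hz : Differentiable ℝ (fun x : Matrix (Fin d) (Fin c) ℝ × Matrix (Fin d) (Fin c) ℝ ×
        Matrix (Fin d) (Fin c) ℝ × Matrix (Fin c) (Fin p) ℝ => x.2.2.2) :=
      differentiable_snd.comp (differentiable_snd.comp differentiable_snd)
    have hm1 : Differentiable ℝ (fun x : Matrix (Fin d) (Fin c) ℝ × Matrix (Fin d) (Fin c) ℝ ×
        Matrix (Fin d) (Fin c) ℝ × Matrix (Fin c) (Fin p) ℝ => x.1 * x.2.2.2) :=
      differentiable_fst.matMul hz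
    have h2 : Differentiable ℝ (fun x : Matrix (Fin d) (Fin c) ℝ × Matrix (Fin d) (Fin c) ℝ ×
        Matrix (Fin d) (Fin c) ℝ × Matrix (Fin c) (Fin p) ℝ => x.2.1 * x.2.2.2) :=
      (differentiable_fst.comp differentiable_snd).matMul hz
    have h3 : Differentiable ℝ (fun x : Matrix (Fin d) (Fin c) ℝ × Matrix (Fin d) (Fin c) ℝ ×
        Matrix (Fin d) (Fin c) ℝ × Matrix (Fin c) (Fin p) ℝ => x.2.2.1 * x.2.2.2) :=
      (differentiable_fst.comp (differentiable_snd.comp differentiable_snd)).matMul hz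
    have hT : Differentiable ℝ (fun x : Matrix (Fin d) (Fin c) ℝ × Matrix (Fin d) (Fin c) ℝ ×
        Matrix (Fin d) (Fin c) ℝ × Matrix (Fin c) (Fin p) ℝ => (x.1 * x.2.2.2)ᵀ) :=
      differentiable_matrix_of fun i j => (differentiable_entry j i).comp hm1
    have hS : Differentiable ℝ (fun x : Matrix (Fin d) (Fin c) ℝ × Matrix (Fin d) (Fin c) ℝ ×
        Matrix (Fin d) (Fin c) ℝ × Matrix (Fin c) (Fin p) ℝ =>
        (Real.sqrt d)⁻¹ • ((x.1 * x.2.2.2)ᵀ * (x.2.1 * x.2.2.2))) := (hT.matMul h2).fun_const_smul _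
    have hA : Differentiable ℝ (fun x : Matrix (Fin d) (Fin c) ℝ × Matrix (Fin d) (Fin c) ℝ ×
        Matrix (Fin d) (Fin c) ℝ × Matrix (Fin c) (Fin p) ℝ =>
        Attn (x.1 * x.2.2.2) (x.2.1 * x.2.2.2) (x.2.2.1 * x.2.2.2)) :=
      h3.matMul (differentiable_softmaxCols.comp hS)
    exact hf.comp ((differentiable_const W).matMul hA)
  · intro Q K V z
    have hg : Differentiable ℝ (attnLoss W f) := differentiable_attnLoss W hf
    have hD : HasFDerivAt (attnLoss W f) (fderiv ℝ (attnLoss W f) (Q * z, K * z, V * z))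
        (Q * z, K * z, V * z) := (hg _).hasFDerivAt
    set D := fderiv ℝ (attnLoss W f) (Q * z, K * z, V * z)
    refine ⟨Matrix.of fun i j => D (Matrix.single i j (1:ℝ) * z, 0, 0),
            Matrix.of fun i j => D (0, Matrix.single i j (1:ℝ) * z, 0),
            Matrix.of fun i j => D (0, 0, Matrix.single i j (1:ℝ) * z),
            Matrix.of fun a j => D (Q * Matrix.single a j (1:ℝ), K * Matrix.single a j (1:ℝ),
              V * Matrix.single a j (1:ℝ)), ?_, ?_, ?_, ?_, ?_⟩
    · -- gradient in Q
      refine ⟨D.comp ((mulRightCLM z).prod 0), ?_, ?_⟩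
      · have hin : HasFDerivAt
            (fun Q' : Matrix (Fin d) (Fin c) ℝ => (mulRightCLM z Q', (K * z, V * z)))
            ((mulRightCLM z).prod 0) Q :=
          HasFDerivAt.prodMk ((mulRightCLM z).hasFDerivAt (x := Q)) (hasFDerivAt_const (K * z, V * z) Q)
        show HasFDerivAt (attnLoss W f ∘ fun Q' => (mulRightCLM z Q', (K * z, V * z)))
          (D.comp ((mulRightCLM z).prod 0)) Q
        exact hD.comp Q hin
      · intro H
        rw [clm_expand (D.comp ((mulRightCLM z).prod 0)) H, traceT_mul]
        refine Finset.sum_congr rfl fun i _ => Finset.sum_congr rfl fun j _ => ?_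
        simp [mul_comm, Prod.mk_zero_zero]
    · -- gradient in K
      refine ⟨D.comp ((0 : Matrix (Fin d) (Fin c) ℝ →L[ℝ] Matrix (Fin d) (Fin p) ℝ).prod
          ((mulRightCLM z).prod 0)), ?_, ?_⟩
      · have hin : HasFDerivAt
            (fun K' : Matrix (Fin d) (Fin c) ℝ => (Q * z, (mulRightCLM z K', V * z)))
            ((0 : Matrix (Fin d) (Fin c) ℝ →L[ℝ] Matrix (Fin d) (Fin p) ℝ).prod
              ((mulRightCLM z).prod 0)) K :=
          HasFDerivAt.prodMk (hasFDerivAt_const (Q * z) K)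
            (HasFDerivAt.prodMk ((mulRightCLM z).hasFDerivAt (x := K)) (hasFDerivAt_const (V * z) K))
        show HasFDerivAt (attnLoss W f ∘ fun K' => (Q * z, (mulRightCLM z K', V * z)))
          (D.comp ((0 : Matrix (Fin d) (Fin c) ℝ →L[ℝ] Matrix (Fin d) (Fin p) ℝ).prod
            ((mulRightCLM z).prod 0))) K
        exact hD.comp K hin
      · intro H
        rw [clm_expand _ H, traceT_mul]
        refine Finset.sum_congr rfl fun i _ => Finset.sum_congr rfl fun j _ => ?_
        simp [mul_comm]
    · -- gradient in V
      refine ⟨D.comp ((0 : Matrix (Fin d) (Fin c) ℝ →L[ℝ] Matrix (Fin d) (Fin p) ℝ).prod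
          ((0 : Matrix (Fin d) (Fin c) ℝ →L[ℝ] Matrix (Fin d) (Fin p) ℝ).prod (mulRightCLM z))), ?_, ?_⟩
      · have hin : HasFDerivAt
            (fun V' : Matrix (Fin d) (Fin c) ℝ => (Q * z, (K * z, mulRightCLM z V')))
            ((0 : Matrix (Fin d) (Fin c) ℝ →L[ℝ] Matrix (Fin d) (Fin p) ℝ).prod
              ((0 : Matrix (Fin d) (Fin c) ℝ →L[ℝ] Matrix (Fin d) (Fin p) ℝ).prod (mulRightCLM z))) V :=
          HasFDerivAt.prodMk (hasFDerivAt_const (Q * z) V)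
            (HasFDerivAt.prodMk (hasFDerivAt_const (K * z) V) ((mulRightCLM z).hasFDerivAt (x := V)))
        show HasFDerivAt (attnLoss W f ∘ fun V' => (Q * z, (K * z, mulRightCLM z V')))
          (D.comp ((0 : Matrix (Fin d) (Fin c) ℝ →L[ℝ] Matrix (Fin d) (Fin p) ℝ).prod
            ((0 : Matrix (Fin d) (Fin c) ℝ →L[ℝ] Matrix (Fin d) (Fin p) ℝ).prod (mulRightCLM z)))) V
        exact hD.comp V hin
      · intro H
        rw [clm_expand _ H, traceT_mul]
        refine Finset.sum_congr rfl fun i _ => Finset.sum_congr rfl fun j _ => ?_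
        simp [mul_comm]
    · -- gradient in z
      refine ⟨D.comp ((mulLeftCLM Q).prod ((mulLeftCLM K).prod (mulLeftCLM V))), ?_, ?_⟩
      · have hin : HasFDerivAt
            (fun z' : Matrix (Fin c) (Fin p) ℝ => (mulLeftCLM Q z', (mulLeftCLM K z', mulLeftCLM V z')))
            ((mulLeftCLM Q).prod ((mulLeftCLM K).prod (mulLeftCLM V))) z :=
          HasFDerivAt.prodMk ((mulLeftCLM Q).hasFDerivAt (x := z))
            (HasFDerivAt.prodMk ((mulLeftCLM K).hasFDerivAt (x := z))
              ((mulLeftCLM V).hasFDerivAt (x := z)))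
        show HasFDerivAt (attnLoss W f ∘ fun z' => (mulLeftCLM Q z', (mulLeftCLM K z', mulLeftCLM V z')))
          (D.comp ((mulLeftCLM Q).prod ((mulLeftCLM K).prod (mulLeftCLM V)))) z
        exact hD.comp z hin
      · intro H
        rw [clm_expand _ H, traceT_mul]
        refine Finset.sum_congr rfl fun i _ => Finset.sum_congr rfl fun j _ => ?_
        simp [mul_comm]
    · -- the trace identity
      ext a b
      set M : Matrix (Fin c) (Fin p) ℝ := Matrix.of fun x y => if x = a then z b y else 0 with hM
      have key1 : ∀ (P : Matrix (Fin d) (Fin c) ℝ),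
          ∑ j, z b j • (P * Matrix.single a j (1:ℝ)) = P * M := by
        intro P
        rw [show ∑ j, z b j • (P * Matrix.single a j (1:ℝ))
            = P * ∑ j, z b j • Matrix.single a j (1:ℝ) by
          rw [Matrix.mul_sum]; exact Finset.sum_congr rfl fun j _ => (Matrix.mul_smul P _ _).symm]
        congr 1
        ext x y
        simp [Matrix.sum_apply, Matrix.single, hM, Finset.sum_ite_eq', ite_and, eq_comm]
      have key2 : ∀ (P : Matrix (Fin d) (Fin c) ℝ),
          ∑ i, P i a • (Matrix.single i b (1:ℝ) * z) = P * M := by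
        intro P
        ext x y
        simp only [Matrix.sum_apply, Matrix.smul_apply, Matrix.mul_apply, Matrix.single,
          Matrix.of_apply, smul_eq_mul, hM]
        simp [ite_and, Finset.sum_ite_eq, Finset.sum_ite_eq', Finset.mul_sum]
      have expand : ∀ {ι : Type} [Fintype ι] (w : ι → ℝ)
          (t : ι → Matrix (Fin d) (Fin p) ℝ × Matrix (Fin d) (Fin p) ℝ × Matrix (Fin d) (Fin p) ℝ),
          ∑ i, w i • D (t i) = D (∑ i, w i • t i) := by
        intro ι _ w t
        rw [map_sum]
        exact Finset.sum_congr rfl fun i _ => (map_smul D _ _).symm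
      simp only [Matrix.mul_apply, Matrix.add_apply, Matrix.transpose_apply, Matrix.of_apply]
      have hL : ∑ j, D (Q * Matrix.single a j (1:ℝ), K * Matrix.single a j (1:ℝ),
          V * Matrix.single a j (1:ℝ)) * z b j = D (Q * M, K * M, V * M) := by
        rw [show ∀ (g : Fin p → ℝ), (∑ j, g j * z b j) = ∑ j, z b j • g j from
          fun g => Finset.sum_congr rfl fun j _ => by rw [smul_eq_mul, mul_comm]]
        rw [expand]
        congr 1
        refine Prod.ext ?_ (Prod.ext ?_ ?_) <;>
          simp only [Prod.fst_sum, Prod.snd_sum, Prod.smul_fst, Prod.smul_snd] <;>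
          [exact key1 Q; exact key1 K; exact key1 V]
      have hR : ∀ (P : Matrix (Fin d) (Fin c) ℝ)
          (t : Fin d → Matrix (Fin d) (Fin p) ℝ × Matrix (Fin d) (Fin p) ℝ × Matrix (Fin d) (Fin p) ℝ),
          (∑ i, P i a * D (t i)) = D (∑ i, P i a • t i) := by
        intro P t
        rw [← expand]
        rfl
      rw [hL, hR Q, hR K, hR V]
      have e1 : ∑ i, Q i a • ((Matrix.single i b (1:ℝ) * z, 0, 0) :
          Matrix (Fin d) (Fin p) ℝ × Matrix (Fin d) (Fin p) ℝ × Matrix (Fin d) (Fin p) ℝ)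
          = (Q * M, 0, 0) := by
        refine Prod.ext ?_ (Prod.ext ?_ ?_) <;>
          simp only [Prod.fst_sum, Prod.snd_sum, Prod.smul_fst, Prod.smul_snd, smul_zero,
            Finset.sum_const_zero] <;> first | exact key2 Q | rfl
      have e2 : ∑ i, K i a • ((0, Matrix.single i b (1:ℝ) * z, 0) :
          Matrix (Fin d) (Fin p) ℝ × Matrix (Fin d) (Fin p) ℝ × Matrix (Fin d) (Fin p) ℝ)
          = (0, K * M, 0) := by
        refine Prod.ext ?_ (Prod.ext ?_ ?_) <;>
          simp only [Prod.fst_sum, Prod.snd_sum, Prod.smul_fst, Prod.smul_snd, smul_zero,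
            Finset.sum_const_zero] <;> first | exact key2 K | rfl
      have e3 : ∑ i, V i a • ((0, 0, Matrix.single i b (1:ℝ) * z) :
          Matrix (Fin d) (Fin p) ℝ × Matrix (Fin d) (Fin p) ℝ × Matrix (Fin d) (Fin p) ℝ)
          = (0, 0, V * M) := by
        refine Prod.ext ?_ (Prod.ext ?_ ?_) <;>
          simp only [Prod.fst_sum, Prod.snd_sum, Prod.smul_fst, Prod.smul_snd, smul_zero,
            Finset.sum_const_zero] <;> first | exact key2 V | rfl
      rw [e1, e2, e3, ← map_add, ← map_add]
      congr 1
      refine Prod.ext ?_ (Prod.ext ?_ ?_) <;> simp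
end
end

section
/- (Theorem 1, uniqueness of recovery.) Let L(Q,K,V,z) = g(Qz, Kz, Vz) be the self-attention loss and let M := ∇_z L ∈ ℝ^{c×p} be its gradient matrix with respect to z, and B := Qᵀ(∇_Q L) + Kᵀ(∇_K L) + Vᵀ(∇_V L) ∈ ℝ^{c×c}. If M has full column rank p, then zᵀ is the unique matrix X ∈ ℝ^{p×c} satisfying M X = B; moreover MᵀM is invertible and zᵀ = (MᵀM)⁻¹ Mᵀ B. -/
/-!
STATEMENT 0 (APRIL, gradients of the self-attention loss w.r.t. Q, K, V).
The loss is `L(Q,K,V,z) = g (Q*z, K*z, V*z)`.  If `g` has gradient matrices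
`Gq, Gk, Gv` (w.r.t. its three arguments, via the Frobenius inner product)
at `(Q*z, K*z, V*z)`, then the gradient matrix of `Q ↦ L(Q,K,V,z)` is
`Gq * zᵀ`, and likewise `Gk * zᵀ` for `K` and `Gv * zᵀ` for `V`.
-/

open Matrix

attribute [local instance] Matrix.normedAddCommGroup Matrix.normedSpace

noncomputable section

/-- `(Gq, Gk, Gv)` are the gradient matrices of `g` with respect to its three
matrix arguments at the point `x = (q, k, v)`, i.e. they represent the Fréchet
derivative of `g` at `x` via the Frobenius inner product. -/
def HasGradientTripleAt {d p : ℕ}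
    (g : Matrix (Fin d) (Fin p) ℝ × Matrix (Fin d) (Fin p) ℝ × Matrix (Fin d) (Fin p) ℝ → ℝ)
    (Gq Gk Gv : Matrix (Fin d) (Fin p) ℝ)
    (x : Matrix (Fin d) (Fin p) ℝ × Matrix (Fin d) (Fin p) ℝ × Matrix (Fin d) (Fin p) ℝ) :
    Prop :=
  ∃ D : (Matrix (Fin d) (Fin p) ℝ × Matrix (Fin d) (Fin p) ℝ × Matrix (Fin d) (Fin p) ℝ) →L[ℝ] ℝ,
    HasFDerivAt g D x ∧
    ∀ Hq Hk Hv, D (Hq, Hk, Hv) =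
      Matrix.trace (Gqᵀ * Hq) + Matrix.trace (Gkᵀ * Hk) + Matrix.trace (Gvᵀ * Hv)

/-!
STATEMENT 4 (Theorem 1, uniqueness of recovery): with `M := ∇_z L` and
`B := Qᵀ (∇_Q L) + Kᵀ (∇_K L) + Vᵀ (∇_V L)`, if `M` has full column rank `p`
then `zᵀ` is the unique solution `X` of `M * X = B`; moreover `Mᵀ * M` is
invertible and `zᵀ = (Mᵀ M)⁻¹ Mᵀ B`.
-/

/-- Uniqueness of the matrix representing a trace functional. -/
private lemma trace_rep_ext {α β : Type*} [Fintype α] [Fintype β] [DecidableEq α] [DecidableEq β]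
    (A B : Matrix α β ℝ) (h : ∀ H : Matrix α β ℝ, Matrix.trace (Aᵀ * H) = Matrix.trace (Bᵀ * H)) : A = B := by
  ext i j
  have := h (Matrix.single i j 1)
  simpa [Matrix.trace, Matrix.mul_apply, Matrix.single, Matrix.diag,
    Finset.sum_ite_eq, Finset.sum_ite_eq', ite_and] using this

/-- Left matrix multiplication as a continuous linear map. -/
private def lmulCLM {c p d : ℕ} (Q : Matrix (Fin d) (Fin c) ℝ) :
    Matrix (Fin c) (Fin p) ℝ →L[ℝ] Matrix (Fin d) (Fin p) ℝ :=
  LinearMap.toContinuousLinearMap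
    { toFun := fun H => Q * H
      map_add' := fun _ _ => Matrix.mul_add _ _ _
      map_smul' := fun _ _ => Matrix.mul_smul _ _ _ }

@[simp] private lemma lmulCLM_apply {c p d : ℕ} (Q : Matrix (Fin d) (Fin c) ℝ)
    (H : Matrix (Fin c) (Fin p) ℝ) : lmulCLM Q H = Q * H := rfl

/-- Right matrix multiplication as a continuous linear map. -/
private def rmulCLM {c p d : ℕ} (z : Matrix (Fin c) (Fin p) ℝ) :
    Matrix (Fin d) (Fin c) ℝ →L[ℝ] Matrix (Fin d) (Fin p) ℝ :=
  LinearMap.toContinuousLinearMap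
    { toFun := fun H => H * z
      map_add' := fun _ _ => Matrix.add_mul _ _ _
      map_smul' := fun _ _ => Matrix.smul_mul _ _ _ }

@[simp] private lemma rmulCLM_apply {c p d : ℕ} (z : Matrix (Fin c) (Fin p) ℝ)
    (H : Matrix (Fin d) (Fin c) ℝ) : rmulCLM z H = H * z := rfl

private lemma full_rank_isUnit {c p : ℕ} (M : Matrix (Fin c) (Fin p) ℝ)
    (hrank : M.rank = p) : IsUnit (Mᵀ * M) := by
  rw [← Matrix.mulVec_injective_iff_isUnit]
  have hk : LinearMap.ker (Mᵀ * M).mulVecLin = LinearMap.ker M.mulVecLin :=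
    Matrix.ker_mulVecLin_transpose_mul_self M
  have hker : LinearMap.ker M.mulVecLin = ⊥ := by
    have h1 := LinearMap.finrank_range_add_finrank_ker M.mulVecLin
    rw [show Module.finrank ℝ (LinearMap.range M.mulVecLin) = p from hrank] at h1
    simp only [Module.finrank_fin_fun] at h1
    have : Module.finrank ℝ (LinearMap.ker M.mulVecLin) = 0 := by omega
    exact Submodule.finrank_eq_zero.mp this
  have hinj : Function.Injective (Mᵀ * M).mulVecLin := by
    rw [← LinearMap.ker_eq_bot, hk, hker]
  exact fun x y hxy => hinj (by simp only [Matrix.mulVecLin_apply]; exact hxy)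

theorem april_unique_recovery {p c d : ℕ} (hp : 0 < p) (hc : 0 < c) (hd : 0 < d)
    (g : Matrix (Fin d) (Fin p) ℝ × Matrix (Fin d) (Fin p) ℝ × Matrix (Fin d) (Fin p) ℝ → ℝ)
    (hg : Differentiable ℝ g)
    (Q K V : Matrix (Fin d) (Fin c) ℝ) (z : Matrix (Fin c) (Fin p) ℝ)
    (Gq Gk Gv : Matrix (Fin d) (Fin p) ℝ)
    (hgrad : HasGradientTripleAt g Gq Gk Gv (Q * z, K * z, V * z))
    (M : Matrix (Fin c) (Fin p) ℝ) (GQ GK GV : Matrix (Fin d) (Fin c) ℝ)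
    (hM : HasGradientMatrixAt (fun z' => g (Q * z', K * z', V * z')) M z)
    (hGQ : HasGradientMatrixAt (fun Q' => g (Q' * z, K * z, V * z)) GQ Q)
    (hGK : HasGradientMatrixAt (fun K' => g (Q * z, K' * z, V * z)) GK K)
    (hGV : HasGradientMatrixAt (fun V' => g (Q * z, K * z, V' * z)) GV V)
    (hrank : M.rank = p) :
    IsUnit (Mᵀ * M) ∧
    (∀ X : Matrix (Fin p) (Fin c) ℝ,
        M * X = Qᵀ * GQ + Kᵀ * GK + Vᵀ * GV ↔ X = zᵀ) ∧
    zᵀ = (Mᵀ * M)⁻¹ * Mᵀ * (Qᵀ * GQ + Kᵀ * GK + Vᵀ * GV)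
:= by
  classical
  obtain ⟨D, hD, hDval⟩ := hgrad
  -- Step 1: M = Qᵀ * Gq + Kᵀ * Gk + Vᵀ * Gv
  have hMeq : M = Qᵀ * Gq + Kᵀ * Gk + Vᵀ * Gv := by
    obtain ⟨DM, hDM, hDMval⟩ := hM
    have hchain : HasFDerivAt (fun z' => g (Q * z', K * z', V * z'))
        (D.comp ((lmulCLM Q).prod ((lmulCLM K).prod (lmulCLM V)))) z :=
      hD.comp z (((lmulCLM Q).prod ((lmulCLM K).prod (lmulCLM V))).hasFDerivAt)
    have huniq := hDM.unique hchain
    refine trace_rep_ext _ _ fun H => ?_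
    have h1 : DM H = D (Q * H, K * H, V * H) := by
      rw [huniq]; rfl
    rw [hDMval H] at h1
    rw [h1, hDval]
    simp only [Matrix.transpose_add, Matrix.transpose_mul, Matrix.transpose_transpose,
      Matrix.add_mul, Matrix.trace_add, Matrix.mul_assoc]
  -- Step 2: GQ = Gq * zᵀ etc.
  have hGQeq : GQ = Gq * zᵀ := by
    obtain ⟨DQ, hDQ, hDQval⟩ := hGQ
    have hlin : HasFDerivAt (fun Q' : Matrix (Fin d) (Fin c) ℝ => (Q' * z, K * z, V * z))
        ((rmulCLM z).prod ((0 : Matrix (Fin d) (Fin c) ℝ →L[ℝ] Matrix (Fin d) (Fin p) ℝ).prod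
          (0 : Matrix (Fin d) (Fin c) ℝ →L[ℝ] Matrix (Fin d) (Fin p) ℝ))) Q :=
      HasFDerivAt.prodMk ((rmulCLM z).hasFDerivAt) (HasFDerivAt.prodMk (hasFDerivAt_const _ _) (hasFDerivAt_const _ _))
    have hchain := hD.comp Q hlin
    have huniq := hDQ.unique hchain
    refine trace_rep_ext _ _ fun H => ?_
    have h1 : DQ H = D (H * z, 0, 0) := by rw [huniq]; rfl
    rw [hDQval H] at h1
    rw [h1, hDval]
    simp only [Matrix.mul_zero, Matrix.trace_zero, add_zero,
      Matrix.transpose_mul, Matrix.transpose_transpose]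
    rw [← Matrix.mul_assoc, Matrix.trace_mul_comm (Gqᵀ * H) z, Matrix.mul_assoc]
  have hGKeq : GK = Gk * zᵀ := by
    obtain ⟨DK, hDK, hDKval⟩ := hGK
    have hlin : HasFDerivAt (fun K' : Matrix (Fin d) (Fin c) ℝ => (Q * z, K' * z, V * z))
        ((0 : Matrix (Fin d) (Fin c) ℝ →L[ℝ] Matrix (Fin d) (Fin p) ℝ).prod
          ((rmulCLM z).prod (0 : Matrix (Fin d) (Fin c) ℝ →L[ℝ] Matrix (Fin d) (Fin p) ℝ))) K :=
      HasFDerivAt.prodMk (hasFDerivAt_const _ _) (HasFDerivAt.prodMk ((rmulCLM z).hasFDerivAt) (hasFDerivAt_const _ _))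
    have hchain := hD.comp K hlin
    have huniq := hDK.unique hchain
    refine trace_rep_ext _ _ fun H => ?_
    have h1 : DK H = D (0, H * z, 0) := by rw [huniq]; rfl
    rw [hDKval H] at h1
    rw [h1, hDval]
    simp only [Matrix.mul_zero, Matrix.trace_zero, add_zero, zero_add,
      Matrix.transpose_mul, Matrix.transpose_transpose]
    rw [← Matrix.mul_assoc, Matrix.trace_mul_comm (Gkᵀ * H) z, Matrix.mul_assoc]
  have hGVeq : GV = Gv * zᵀ := by
    obtain ⟨DV, hDV, hDVval⟩ := hGV
    have hlin : HasFDerivAt (fun V' : Matrix (Fin d) (Fin c) ℝ => (Q * z, K * z, V' * z))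
        ((0 : Matrix (Fin d) (Fin c) ℝ →L[ℝ] Matrix (Fin d) (Fin p) ℝ).prod
          ((0 : Matrix (Fin d) (Fin c) ℝ →L[ℝ] Matrix (Fin d) (Fin p) ℝ).prod (rmulCLM z))) V :=
      HasFDerivAt.prodMk (hasFDerivAt_const _ _) (HasFDerivAt.prodMk (hasFDerivAt_const _ _) ((rmulCLM z).hasFDerivAt))
    have hchain := hD.comp V hlin
    have huniq := hDV.unique hchain
    refine trace_rep_ext _ _ fun H => ?_
    have h1 : DV H = D (0, 0, H * z) := by rw [huniq]; rfl
    rw [hDVval H] at h1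
    rw [h1, hDval]
    simp only [Matrix.mul_zero, Matrix.trace_zero, zero_add,
      Matrix.transpose_mul, Matrix.transpose_transpose]
    rw [← Matrix.mul_assoc, Matrix.trace_mul_comm (Gvᵀ * H) z, Matrix.mul_assoc]
  -- Step 3: B = M * zᵀ
  have hB : Qᵀ * GQ + Kᵀ * GK + Vᵀ * GV = M * zᵀ := by
    rw [hGQeq, hGKeq, hGVeq, hMeq]
    simp only [Matrix.add_mul, Matrix.mul_assoc]
  have hu : IsUnit (Mᵀ * M) := full_rank_isUnit M hrank
  have hudet : IsUnit (Mᵀ * M).det := (Matrix.isUnit_iff_isUnit_det _).mp hu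
  have hinv : (Mᵀ * M)⁻¹ * (Mᵀ * M) = 1 := Matrix.nonsing_inv_mul _ hudet
  refine ⟨hu, fun X => ⟨fun hX => ?_, fun hX => by rw [hX, hB]⟩, ?_⟩
  · rw [hB] at hX
    have : (Mᵀ * M)⁻¹ * (Mᵀ * (M * X)) = (Mᵀ * M)⁻¹ * (Mᵀ * (M * zᵀ)) := by rw [hX]
    calc X = ((Mᵀ * M)⁻¹ * (Mᵀ * M)) * X := by rw [hinv, Matrix.one_mul]
    _ = (Mᵀ * M)⁻¹ * (Mᵀ * (M * X)) := by rw [Matrix.mul_assoc, Matrix.mul_assoc]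
    _ = (Mᵀ * M)⁻¹ * (Mᵀ * (M * zᵀ)) := this
    _ = ((Mᵀ * M)⁻¹ * (Mᵀ * M)) * zᵀ := by rw [Matrix.mul_assoc, Matrix.mul_assoc]
    _ = zᵀ := by rw [hinv, Matrix.one_mul]
  · rw [hB]
    calc zᵀ = ((Mᵀ * M)⁻¹ * (Mᵀ * M)) * zᵀ := by rw [hinv, Matrix.one_mul]
    _ = (Mᵀ * M)⁻¹ * Mᵀ * (M * zᵀ) := by simp only [Matrix.mul_assoc]
end
end

section
/- (Closed-form recovery for a fully-connected layer.) Let x ∈ ℝ^m, W ∈ ℝ^{n×m}, b ∈ ℝ^n, and let f : ℝ^n → ℝ be Fréchet differentiable with gradient vector r = ∇f(Wx + b) ∈ ℝ^n. Define the loss L(W,b) = f(Wx + b). Then the gradient matrices satisfy ∇_W L = r xᵀ and ∇_b L = r; consequently, for any index i with r_i ≠ 0, the input is recovered exactly as x_j = (∇_W L)_{ij} / (∇_b L)_i for every j. -/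
/-!
STATEMENT 9 (closed-form recovery for a fully-connected layer).
For `L(W,b) = f (W x + b)` with `r = ∇f (W x + b)`, the gradients satisfy
`∇_W L = r xᵀ` and `∇_b L = r`; hence for any `i` with `r i ≠ 0`,
`x j = (∇_W L) i j / (∇_b L) i` for every `j`.
-/

open Matrix

attribute [local instance] Matrix.normedAddCommGroup Matrix.normedSpace

noncomputable section

/-- `r` is the gradient vector of the scalar function `F` at `x`:
it represents the Fréchet derivative of `F` at `x` via the Euclidean
inner product, `(dF)(h) = ∑ i, r i * h i`. -/
def HasGradientVecAt {ι : Type*} [Fintype ι]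
    (F : (ι → ℝ) → ℝ) (r : ι → ℝ) (x : ι → ℝ) : Prop :=
  ∃ D : (ι → ℝ) →L[ℝ] ℝ, HasFDerivAt F D x ∧ ∀ h, D h = ∑ i, r i * h i

theorem fc_layer_closed_form_recovery {m n : ℕ} (hm : 0 < m) (hn : 0 < n)
    (x : Fin m → ℝ) (W : Matrix (Fin n) (Fin m) ℝ) (b : Fin n → ℝ)
    (f : (Fin n → ℝ) → ℝ) (hf : Differentiable ℝ f)
    (r : Fin n → ℝ) (hr : HasGradientVecAt f r (W.mulVec x + b))
    (GW : Matrix (Fin n) (Fin m) ℝ) (gb : Fin n → ℝ)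
    (hGW : HasGradientMatrixAt (fun W' : Matrix (Fin n) (Fin m) ℝ =>
      f (W'.mulVec x + b)) GW W)
    (hgb : HasGradientVecAt (fun b' => f (W.mulVec x + b')) gb b) :
    GW = Matrix.vecMulVec r x ∧ gb = r ∧
    ∀ i, r i ≠ 0 → ∀ j, x j = GW i j / gb i := by
  obtain ⟨D, hD, hDval⟩ := hr
  obtain ⟨DW, hDW, hDWval⟩ := hGW
  obtain ⟨Db, hDb, hDbval⟩ := hgb
  -- the linear map H ↦ H.mulVec x as a CLM
  set Lm : Matrix (Fin n) (Fin m) ℝ →ₗ[ℝ] (Fin n → ℝ) :=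
    { toFun := fun H => H.mulVec x
      map_add' := fun A B => Matrix.add_mulVec A B x
      map_smul' := fun c A => by simp [Matrix.smul_mulVec] } with hLm
  set L : Matrix (Fin n) (Fin m) ℝ →L[ℝ] (Fin n → ℝ) := Lm.toContinuousLinearMap with hL
  have hgdiff : HasFDerivAt (fun W' : Matrix (Fin n) (Fin m) ℝ => W'.mulVec x + b) L W :=
    L.hasFDerivAt.add_const b
  have hcomp : HasFDerivAt (fun W' : Matrix (Fin n) (Fin m) ℝ => f (W'.mulVec x + b))
      (D.comp L) W := hD.comp W hgdiff
  have hDWeq : DW = D.comp L := hDW.unique hcomp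
  have hkey : ∀ H : Matrix (Fin n) (Fin m) ℝ, Matrix.trace (GWᵀ * H) = ∑ i, r i * (H.mulVec x i) := by
    intro H
    rw [← hDWval H, hDWeq]
    simp [hDval, L, Lm]
  have hGWr : GW = Matrix.vecMulVec r x := by
    ext i j
    have := hkey (Matrix.single i j 1)
    simp only [Matrix.trace, Matrix.diag, Matrix.mul_apply, Matrix.transpose_apply,
      Matrix.single, Matrix.mulVec, dotProduct, Matrix.of_apply] at this
    simp only [Finset.mul_sum] at this
    rw [Finset.sum_comm] at this
    simpa [ite_and, Finset.sum_ite_eq, Matrix.vecMulVec_apply, mul_comm] using this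
  -- gb = r
  have hcompb : HasFDerivAt (fun b' : Fin n → ℝ => f (W.mulVec x + b')) D b := by
    have : HasFDerivAt (fun b' : Fin n → ℝ => W.mulVec x + b')
        (ContinuousLinearMap.id ℝ (Fin n → ℝ)) b := by
      exact (hasFDerivAt_id b).const_add (W.mulVec x)
    have h := hD.comp b this
    rw [ContinuousLinearMap.comp_id] at h
    exact h
  have hDbeq : Db = D := hDb.unique hcompb
  have hgbr : gb = r := by
    funext i
    have h1 := hDbval (Pi.single i 1)
    rw [hDbeq, hDval] at h1
    simpa [Pi.single_apply, mul_comm] using h1.symm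
  refine ⟨hGWr, hgbr, ?_⟩
  intro i hi j
  rw [hGWr, hgbr, Matrix.vecMulVec_apply, mul_comm, mul_div_assoc, div_self hi, mul_one]
end
end
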